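/- Let χ be an irreducible complex character of G with kernel K. Then the generic symmetry group of χ equals { π ∈ Sym(G) : π(gK) = π(1)gK for all g ∈ G }, and the extended character satisfies χ̂(π) = χ(π(1)) for all generic symmetries π. -/

import Mathlib

set_option linter.unusedSectionVars false

open Polynomial LinearMap

section Aux

variable {G : Type*} [Group G] [Finite G]
variable {V : Type*} [AddCommGroup V] [Module ℂ V] [FiniteDimensional ℂ V]
variable (ρ : Representation ℂ G V)

lemma aux_pow_eq_one (y : G) : (ρ y) ^ (orderOf y) = 1 := by
  rw [← map_pow, pow_orderOf_eq_one, map_one]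

lemma aux_eigen_sup (y : G) :
    ⨆ μ : ℂ, Module.End.eigenspace (ρ y) μ = ⊤ := by
  have hm : orderOf y ≠ 0 := (orderOf_pos y).ne'
  have hsq : Squarefree (X ^ (orderOf y) - C (1 : ℂ)) := by
    have := Polynomial.separable_X_pow_sub_C_unit (R := ℂ) (n := orderOf y) 1
      (isUnit_iff_ne_zero.mpr (Nat.cast_ne_zero.mpr hm))
    simpa using this.squarefree
  have hae : aeval (ρ y : Module.End ℂ V) (X ^ (orderOf y) - C (1 : ℂ)) = 0 := by
    simp [map_sub, map_pow, aux_pow_eq_one ρ y]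
  have hss := Module.End.isSemisimple_of_squarefree_aeval_eq_zero hsq hae
  have htop := Module.End.iSup_maxGenEigenspace_eq_top (ρ y : Module.End ℂ V)
  have heq := fun μ : ℂ => hss.isFinitelySemisimple.maxGenEigenspace_eq_eigenspace μ
  simp_rw [heq] at htop
  exact htop

lemma aux_eigen_root (y : G) {μ : ℂ}
    (h : Module.End.eigenspace (ρ y) μ ≠ ⊥) : μ ^ orderOf y = 1 := by
  obtain ⟨v, hv, hv0⟩ := Submodule.exists_mem_ne_zero_of_ne_bot h
  rw [Module.End.mem_eigenspace_iff] at hv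
  have hpow : ∀ k : ℕ, ((ρ y) ^ k) v = μ ^ k • v := by
    intro k
    induction k with
    | zero => simp
    | succ n ih =>
        rw [pow_succ, pow_succ, Module.End.mul_apply, hv, map_smul, ih, smul_smul, mul_comm]
  have := hpow (orderOf y)
  rw [aux_pow_eq_one ρ y] at this
  have : (μ ^ orderOf y - 1) • v = 0 := by
    rw [sub_smul, one_smul, ← this]; simp
  rcases smul_eq_zero.mp this with h1 | h1
  · linear_combination h1
  · exact absurd h1 hv0

end Aux

section Aux2

variable {G : Type*} [Group G] [Finite G]
variable {V : Type*} [AddCommGroup V] [Module ℂ V] [FiniteDimensional ℂ V]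
variable (ρ : Representation ℂ G V)

lemma aux_trace_ker (y : G) :
    trace ℂ V (ρ y) = trace ℂ V (ρ 1) ↔ ∀ v : V, ρ y v = v := by
  have h1 : (ρ (1 : G)) = LinearMap.id (R := ℂ) (M := V) := by
    rw [map_one]; rfl
  constructor
  · intro htr
    set f : Module.End ℂ V := ρ y with hf
    have hsup := aux_eigen_sup ρ y
    have hfin : {μ : ℂ | Module.End.eigenspace f μ ≠ ⊥}.Finite := by
      apply (Polynomial.finite_setOf_isRoot (p := X ^ (orderOf y) - C (1 : ℂ)) ?_).subset
      · intro μ hμ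
        simp only [Set.mem_setOf_eq, Polynomial.IsRoot.def, eval_sub, eval_pow, eval_X, eval_C,
          sub_eq_zero]
        exact aux_eigen_root ρ y hμ
      · intro h
        have := congrArg (fun p => Polynomial.coeff p (orderOf y)) h
        simp [Polynomial.coeff_X_pow, Polynomial.coeff_one, (orderOf_pos y).ne'] at this
    have hint : DirectSum.IsInternal (fun μ : ℂ => Module.End.eigenspace f μ) :=
      DirectSum.isInternal_submodule_of_iSupIndep_of_iSup_eq_top
        f.eigenspaces_iSupIndep hsup
    have hmt : ∀ μ : ℂ, Set.MapsTo f (Module.End.eigenspace f μ) (Module.End.eigenspace f μ) := by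
      intro μ x hx
      rw [SetLike.mem_coe, Module.End.mem_eigenspace_iff] at hx ⊢
      rw [hx, map_smul, hx]
    have hmt' : ∀ μ : ℂ, Set.MapsTo (LinearMap.id (R := ℂ) (M := V))
        (Module.End.eigenspace f μ) (Module.End.eigenspace f μ) := fun μ x hx => hx
    have htr1 := trace_eq_sum_trace_restrict' hint hfin hmt
    have htr2 := trace_eq_sum_trace_restrict' hint hfin hmt'
    have hres : ∀ μ : ℂ, trace ℂ (Module.End.eigenspace f μ) (f.restrict (hmt μ)) =
        μ * (Module.finrank ℂ (Module.End.eigenspace f μ) : ℂ) := by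
      intro μ
      have : f.restrict (hmt μ) = μ • LinearMap.id := by
        ext x
        have hx := x.2
        rw [Module.End.mem_eigenspace_iff] at hx
        simp only [LinearMap.restrict_coe_apply, LinearMap.smul_apply, LinearMap.id_apply,
          SetLike.val_smul]
        exact hx
      rw [this, map_smul, trace_id, smul_eq_mul]
    have hres' : ∀ μ : ℂ, trace ℂ (Module.End.eigenspace f μ)
        ((LinearMap.id (R := ℂ) (M := V)).restrict (hmt' μ)) =
        (Module.finrank ℂ (Module.End.eigenspace f μ) : ℂ) := by
      intro μ
      have : (LinearMap.id (R := ℂ) (M := V)).restrict (hmt' μ) = LinearMap.id := by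
        ext x; rfl
      rw [this, trace_id]
    rw [htr, h1, htr2] at htr1
    simp only [hres, hres'] at htr1
    -- htr1 : ∑ n = ∑ μ * n
    set s := hfin.toFinset with hs
    have hre : ∑ μ ∈ s, ((Module.finrank ℂ (Module.End.eigenspace f μ) : ℝ) * (1 - μ.re)) = 0 := by
      have := congrArg Complex.re htr1
      simp only [Complex.re_sum, Complex.mul_re, Complex.natCast_re, Complex.natCast_im,
        mul_zero, sub_zero, zero_mul] at this
      simp only [mul_sub, mul_one, Finset.sum_sub_distrib]
      rw [this, Finset.sum_congr rfl (fun μ _ => mul_comm (μ.re)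
        ((Module.finrank ℂ (Module.End.eigenspace f μ) : ℝ))), sub_self]
    have hone : ∀ μ ∈ s, μ = 1 := by
      intro μ hμ
      have hne : Module.End.eigenspace f μ ≠ ⊥ := by
        simpa [hs] using (Set.Finite.mem_toFinset hfin).mp hμ
      have habs : ‖μ‖ = 1 := by
        have := Complex.norm_eq_one_of_pow_eq_one (aux_eigen_root ρ y hne) (orderOf_pos y).ne'
        exact this
      have hrele : μ.re ≤ 1 := by
        have := Complex.re_le_norm μ
        rwa [habs] at this
      have hpos : 0 < Module.finrank ℂ (Module.End.eigenspace f μ) := by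
        by_contra hc
        push_neg at hc
        exact hne (Submodule.finrank_eq_zero.mp (Nat.le_zero.mp hc))
      have hterm : (Module.finrank ℂ (Module.End.eigenspace f μ) : ℝ) * (1 - μ.re) = 0 := by
        have hnn : ∀ ν ∈ s, 0 ≤ (Module.finrank ℂ (Module.End.eigenspace f ν) : ℝ) * (1 - ν.re) := by
          intro ν hν
          have hneν : Module.End.eigenspace f ν ≠ ⊥ := by
            simpa [hs] using (Set.Finite.mem_toFinset hfin).mp hν
          have habsν := Complex.norm_eq_one_of_pow_eq_one (aux_eigen_root ρ y hneν)
            (orderOf_pos y).ne'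
          have : ν.re ≤ 1 := by
            have h' := Complex.re_le_norm ν
            rwa [habsν] at h'
          exact mul_nonneg (Nat.cast_nonneg _) (by linarith)
        exact (Finset.sum_eq_zero_iff_of_nonneg hnn).mp hre μ hμ
      have hre1 : μ.re = 1 := by
        rcases mul_eq_zero.mp hterm with h' | h'
        · exact absurd (Nat.cast_eq_zero.mp h') hpos.ne'
        · linarith
      have him : μ.im = 0 := by
        have h2 := Complex.sq_norm μ
        rw [habs, Complex.normSq_apply, hre1] at h2
        nlinarith
      exact Complex.ext hre1 him
    have hbot : ∀ μ : ℂ, μ ≠ 1 → Module.End.eigenspace f μ = ⊥ := by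
      intro μ hμ
      by_contra hc
      exact hμ (hone μ (hfin.mem_toFinset.mpr hc))
    have htop : (⊤ : Submodule ℂ V) ≤ Module.End.eigenspace f 1 := by
      rw [← hsup]
      apply iSup_le
      intro μ
      by_cases hμ : μ = 1
      · rw [hμ]
      · rw [hbot μ hμ]; exact bot_le
    intro v
    have hv : v ∈ Module.End.eigenspace f 1 := htop Submodule.mem_top
    rw [Module.End.mem_eigenspace_iff] at hv
    simpa using hv
  · intro h
    have : ρ y = ρ (1 : G) := by
      ext v; rw [h v, h1]; rfl
    rw [this]

end Aux2

section Aux3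

variable {G : Type*} [Group G] [Finite G]
variable {V : Type*} [AddCommGroup V] [Module ℂ V] [FiniteDimensional ℂ V]
variable (ρ : Representation ℂ G V)

lemma aux_gen
    (hirr : ∀ W : Submodule ℂ V, (∀ g : G, ∀ x ∈ W, ρ g x ∈ W) → W = ⊥ ∨ W = ⊤)
    {w : V} (hw : w ≠ 0) :
    Submodule.span ℂ (Set.range fun g : G => ρ g w) = ⊤ := by
  set W := Submodule.span ℂ (Set.range fun g : G => ρ g w) with hW
  have hinv : ∀ g : G, ∀ x ∈ W, ρ g x ∈ W := by
    intro g x hx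
    have hle : W.map (ρ g) ≤ W := by
      rw [hW, Submodule.map_span, Submodule.span_le]
      rintro _ ⟨_, ⟨h, rfl⟩, rfl⟩
      exact Submodule.subset_span ⟨g * h, show ρ (g*h) w = ρ g (ρ h w) by rw [map_mul]; rfl⟩
    exact hle ⟨x, hx, rfl⟩
  rcases hirr W hinv with h | h
  · exfalso; apply hw
    have hmem : w ∈ W := Submodule.subset_span ⟨1, show ρ (1:G) w = w by rw [map_one]; rfl⟩
    rw [h] at hmem
    simpa using hmem
  · exact h

lemma aux_step1
    (hirr : ∀ W : Submodule ℂ V, (∀ g : G, ∀ x ∈ W, ρ g x ∈ W) → W = ⊥ ∨ W = ⊤)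
    (π : Equiv.Perm G)
    (H : ∀ w : V, Submodule.span ℂ (Set.range fun g : G => ρ g w) = ⊤ →
      ∃ A : V ≃ₗ[ℂ] V, ∀ g : G, A (ρ g w) = ρ (π g) w) :
    ∀ g : G, ∀ v : V, ρ (π g) v = ρ (π 1) (ρ g v) := by
  intro g
  have hsub : ∀ μ : ℂ, Module.End.eigenspace (ρ g) μ ≤
      LinearMap.eqLocus (ρ (π g)) (ρ (π 1) ∘ₗ ρ g) := by
    intro μ v hv
    rw [Module.End.mem_eigenspace_iff] at hv
    rw [LinearMap.mem_eqLocus, LinearMap.comp_apply]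
    by_cases hv0 : v = 0
    · simp [hv0]
    · obtain ⟨A, hA⟩ := H v (aux_gen ρ hirr hv0)
      have h1 : A v = ρ (π 1) v := by simpa using hA 1
      have hg := hA g
      rw [hv, map_smul, h1, ← map_smul, ← hv] at hg
      exact hg.symm
  have htop : LinearMap.eqLocus (ρ (π g)) (ρ (π 1) ∘ₗ ρ g) = ⊤ := by
    rw [← top_le_iff, ← aux_eigen_sup ρ g]
    exact iSup_le hsub
  intro v
  have hv : v ∈ LinearMap.eqLocus (ρ (π g)) (ρ (π 1) ∘ₗ ρ g) := htop ▸ Submodule.mem_top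
  simpa using LinearMap.mem_eqLocus.mp hv

end Aux3

/-- For an irreducible complex character `χ` with kernel `K`, the generic
symmetry group of `χ` is `{π | π(gK) = π(1)gK for all g}`, and `χ̂(π) = χ(π(1))` for
every generic symmetry `π`. -/
theorem generic_sym_of_irreducible_character
    {G : Type*} [Group G] [Finite G]
    (V : Type*) [AddCommGroup V] [Module ℂ V] [FiniteDimensional ℂ V] [Nontrivial V]
    (ρ : Representation ℂ G V)
    (hirr : ∀ W : Submodule ℂ V, (∀ g : G, ∀ x ∈ W, ρ g x ∈ W) → W = ⊥ ∨ W = ⊤) :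
    ({π : Equiv.Perm G |
        ∀ w : V, Submodule.span ℂ (Set.range fun g : G => ρ g w) = ⊤ →
          ∃ A : V ≃ₗ[ℂ] V, ∀ g : G, A (ρ g w) = ρ (π g) w} =
      {π : Equiv.Perm G | ∀ g : G,
        ⇑π '' {x : G | LinearMap.trace ℂ V (ρ (g⁻¹ * x)) = LinearMap.trace ℂ V (ρ 1)} =
          {x : G | LinearMap.trace ℂ V (ρ ((π 1 * g)⁻¹ * x)) =
            LinearMap.trace ℂ V (ρ 1)}}) ∧
    (∀ π : Equiv.Perm G,
      (∀ w : V, Submodule.span ℂ (Set.range fun g : G => ρ g w) = ⊤ →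
        ∃ A : V ≃ₗ[ℂ] V, ∀ g : G, A (ρ g w) = ρ (π g) w) →
      ∀ w : V, Submodule.span ℂ (Set.range fun g : G => ρ g w) = ⊤ →
        ∀ A : V ≃ₗ[ℂ] V, (∀ g : G, A (ρ g w) = ρ (π g) w) →
          LinearMap.trace ℂ V A.toLinearMap = LinearMap.trace ℂ V (ρ (π 1))) := by
  have hmulv : ∀ (a b : G) (u : V), ρ (a * b) u = ρ a (ρ b u) := fun a b u => by
    rw [map_mul]; rfl
  have hcancel : ∀ (a : G) (u : V), ρ a⁻¹ (ρ a u) = u := fun a u => by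
    rw [← hmulv, inv_mul_cancel, map_one, Module.End.one_apply]
  have hcancel' : ∀ (a : G) (u : V), ρ a (ρ a⁻¹ u) = u := fun a u => by
    rw [← hmulv, mul_inv_cancel, map_one, Module.End.one_apply]
  constructor
  · ext π
    simp only [Set.mem_setOf_eq]
    constructor
    · intro H g
      have hstep := aux_step1 ρ hirr π H
      ext x
      simp only [Set.mem_image, Set.mem_setOf_eq]
      constructor
      · rintro ⟨x₀, hx₀, rfl⟩
        have h0 := (aux_trace_ker ρ _).mp hx₀
        apply (aux_trace_ker ρ _).mpr
        intro v
        have hx0 : ∀ u, ρ x₀ u = ρ g u := fun u => by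
          rw [show x₀ = g * (g⁻¹ * x₀) by group, hmulv, h0 u]
        rw [hmulv, hstep x₀ v, hx0 v, ← hmulv (π 1) g v, hcancel]
      · intro hx
        refine ⟨π.symm x, ?_, π.apply_symm_apply x⟩
        have h0 := (aux_trace_ker ρ _).mp hx
        apply (aux_trace_ker ρ _).mpr
        intro v
        have hxv : ∀ u, ρ x u = ρ (π 1 * g) u := fun u => by
          have h' := h0 u
          rw [hmulv] at h'
          have h'' := congrArg (ρ (π 1 * g)) h'
          rwa [hcancel'] at h''
        have heq : ρ (π 1) (ρ (π.symm x) v) = ρ (π 1) (ρ g v) := by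
          have h' := hstep (π.symm x) v
          rw [π.apply_symm_apply] at h'
          rw [← h', hxv v, hmulv]
        have heq2 : ρ (π.symm x) v = ρ g v := by
          have h' := congrArg (ρ ((π 1)⁻¹)) heq
          rwa [hcancel, hcancel] at h'
        rw [hmulv, heq2, hcancel]
    · intro hπ w hw
      have hmain : ∀ g : G, ∀ v : V, ρ (π g) v = ρ (π 1) (ρ g v) := by
        intro g v
        have hg : π g ∈ ⇑π '' {x | LinearMap.trace ℂ V (ρ (g⁻¹ * x)) =
            LinearMap.trace ℂ V (ρ 1)} :=
          ⟨g, by simp only [Set.mem_setOf_eq, inv_mul_cancel], rfl⟩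
        rw [hπ g] at hg
        have h0 := (aux_trace_ker ρ _).mp hg
        have h' := h0 v
        rw [hmulv] at h'
        have h'' := congrArg (ρ (π 1 * g)) h'
        rw [hcancel'] at h''
        rw [h'', hmulv]
      refine ⟨LinearEquiv.ofLinear (ρ (π 1)) (ρ ((π 1)⁻¹)) ?_ ?_, ?_⟩
      · ext v
        simp only [LinearMap.comp_apply, LinearMap.id_apply]
        exact hcancel' (π 1) v
      · ext v
        simp only [LinearMap.comp_apply, LinearMap.id_apply]
        exact hcancel (π 1) v
      · intro g
        show ρ (π 1) (ρ g w) = ρ (π g) w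
        exact (hmain g w).symm
  · intro π H w hw A hA
    have hstep := aux_step1 ρ hirr π H
    have hAeq : A.toLinearMap = ρ (π 1) := by
      apply LinearMap.ext_on hw
      rintro _ ⟨g, rfl⟩
      exact (hA g).trans (hstep g w)
    rw [hAeq]
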